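/- For integers r ≥ 0: sum over k from 0 to 6r of (-1)^k · C(2r, k; 3)^2 = (-1)^r · binomial(4r, r), where C(n,k;3) is the quadrinomial coefficient. -/

import Mathlib

open Polynomial Finset

/-- Polynomial (extended binomial) coefficient: the coefficient of `t^k` in
`(1 + t + ⋯ + t^m)^n`, defined to be `0` for negative `k`. -/
noncomputable def pc (m n : ℕ) (k : ℤ) : ℤ :=
  if 0 ≤ k then
    ((∑ i ∈ Finset.range (m + 1), (Polynomial.X : Polynomial ℤ) ^ i) ^ n).coeff k.toNat
  else 0

noncomputable def qcF (r : ℕ) : Polynomial ℤ := (1 - X) ^ (2*r) * (1 + X) ^ (4*r)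

noncomputable def qcC (r k : ℕ) : ℤ := (qcF r).coeff k

lemma qcHpoly (r : ℕ) (hr : 1 ≤ r) :
    (1 - X^2) * derivative (qcF r) = (C (2*r : ℤ) - C (6*r : ℤ) * X) * qcF r := by
  obtain ⟨s, rfl⟩ := Nat.exists_eq_add_of_le hr
  unfold qcF
  rw [derivative_mul, derivative_pow, derivative_pow]
  have h1 : derivative (1 - X : Polynomial ℤ) = -1 := by simp
  have h2 : derivative (1 + X : Polynomial ℤ) = 1 := by simp
  rw [h1, h2]
  have e1 : 2*(1+s) - 1 = 2*s + 1 := by omega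
  have e2 : 4*(1+s) - 1 = 4*s + 3 := by omega
  have e3 : 2*(1+s) = (2*s+1) + 1 := by omega
  have e4 : 4*(1+s) = (4*s+3) + 1 := by omega
  rw [e1, e2, e3, e4]
  simp only [Nat.cast_add, Nat.cast_mul, Nat.cast_ofNat, Nat.cast_one, map_add, map_mul,
    map_one, map_ofNat]
  ring

lemma qcRecur (r : ℕ) (hr : 1 ≤ r) (k : ℕ) :
    ((k:ℤ)+2) * qcC r (k+2) = 2*r * qcC r (k+1) + ((k:ℤ) - 6*r) * qcC r k := by
  have h := qcHpoly r hr
  have h2 := congrArg (fun p => Polynomial.coeff p (k+1)) h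
  rw [sub_mul, one_mul, coeff_sub, coeff_derivative] at h2
  have hX2 : (X^2 * derivative (qcF r)).coeff (k+1)
      = (k:ℤ) * qcC r k := by
    rcases k with _ | k'
    · rw [coeff_X_pow_mul']
      simp
    · have : k' + 1 + 1 = k' + 2 := rfl
      rw [this, coeff_X_pow_mul, coeff_derivative]
      push_cast
      unfold qcC
      ring
  rw [hX2] at h2
  rw [sub_mul, coeff_sub, coeff_C_mul, mul_assoc (C (6*(r:ℤ))) X (qcF r), coeff_C_mul, coeff_X_mul] at h2
  unfold qcC at hX2 h2 ⊢
  push_cast at h2 ⊢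
  linear_combination h2

lemma qcRevpow (p : Polynomial ℤ) (n : ℕ) : (p^n).reverse = p.reverse ^ n := by
  induction n with
  | zero => simp [reverse]
  | succ n ih => rw [pow_succ, reverse_mul_of_domain, ih, pow_succ]

lemma qcRev1 : (1 - X : Polynomial ℤ).reverse = X - 1 := by
  have h : (1 - X : Polynomial ℤ) = -(X - C 1) := by rw [map_one]; ring
  rw [h, reverse_neg, reverse, natDegree_X_sub_C, reflect_sub]
  simp [reflect_monomial]

lemma qcRev2 : (1 + X : Polynomial ℤ).reverse = 1 + X := by
  have h : (1 + X : Polynomial ℤ) = X + C 1 := by rw [map_one]; ring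
  rw [h, reverse, natDegree_add_C, natDegree_X, reflect_add, reflect_C]
  simp [reflect_monomial]
  ring

lemma one_sub_X_ne : (1 - X : Polynomial ℤ) ≠ 0 := fun h => by
  have := congrArg (fun p : Polynomial ℤ => p.coeff 1) h
  simp [coeff_one] at this

lemma one_add_X_ne : (1 + X : Polynomial ℤ) ≠ 0 := fun h => by
  have := congrArg (fun p : Polynomial ℤ => p.coeff 1) h
  simp [coeff_one] at this

lemma f_reverse (r : ℕ) : (qcF r).reverse = qcF r := by
  unfold qcF
  rw [reverse_mul_of_domain, qcRevpow, qcRevpow, qcRev1, qcRev2]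
  congr 1
  rw [show (X - 1 : Polynomial ℤ) = -(1 - X) by ring, Even.neg_pow ⟨r, by ring⟩]

lemma f_natDegree (r : ℕ) : (qcF r).natDegree = 6*r := by
  unfold qcF
  rw [natDegree_mul (pow_ne_zero _ one_sub_X_ne) (pow_ne_zero _ one_add_X_ne),
    natDegree_pow, natDegree_pow]
  have d1 : (1 - X : Polynomial ℤ).natDegree = 1 := by
    rw [show (1 - X : Polynomial ℤ) = -(X - C 1) by rw [map_one]; ring, natDegree_neg,
      natDegree_X_sub_C]
  have d2 : (1 + X : Polynomial ℤ).natDegree = 1 := by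
    rw [show (1 + X : Polynomial ℤ) = X + C 1 by rw [map_one]; ring, natDegree_add_C,
      natDegree_X]
  rw [d1, d2]; omega

lemma qcPal (r : ℕ) {k : ℕ} (hk : k ≤ 6*r) : qcC r (6*r - k) = qcC r k := by
  unfold qcC
  conv_rhs => rw [← f_reverse r]
  rw [coeff_reverse, f_natDegree, revAt_le hk]

lemma qcStep (r : ℕ) (hr : 1 ≤ r) :
    qcC (r+1) (3*r+3) = qcC r (3*r+3) + 2 * qcC r (3*r+2) - qcC r (3*r+1) - 4 * qcC r (3*r)
      - qcC r (3*r-1) + 2 * qcC r (3*r-2) + qcC r (3*r-3) := by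
  have hf : qcF (r+1) = qcF r + C 2 * (qcF r * X) - qcF r * X^2 - C 4 * (qcF r * X^3)
      - qcF r * X^4 + C 2 * (qcF r * X^5) + qcF r * X^6 := by
    unfold qcF
    rw [show 2*(r+1) = 2*r+2 by ring, show 4*(r+1) = 4*r+4 by ring, pow_add, pow_add,
      show (C 2 : Polynomial ℤ) = 2 by simp, show (C 4 : Polynomial ℤ) = 4 by simp]
    ring
  unfold qcC
  rw [hf]
  have hX : (qcF r * X).coeff (3*r+3) = (qcF r).coeff (3*r+2) := by
    rw [show 3*r+3 = 3*r+2+1 from rfl, coeff_mul_X]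
  rw [coeff_add, coeff_add, coeff_sub, coeff_sub, coeff_sub, coeff_add,
    coeff_C_mul, coeff_C_mul, coeff_C_mul, hX,
    coeff_mul_X_pow', coeff_mul_X_pow', coeff_mul_X_pow', coeff_mul_X_pow',
    coeff_mul_X_pow']
  rw [if_pos (by omega : 2 ≤ 3*r+3), if_pos (by omega : 3 ≤ 3*r+3),
    if_pos (by omega : 4 ≤ 3*r+3), if_pos (by omega : 5 ≤ 3*r+3),
    if_pos (by omega : 6 ≤ 3*r+3)]
  rw [show 3*r+3-2 = 3*r+1 by omega, show 3*r+3-3 = 3*r by omega,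
    show 3*r+3-4 = 3*r-1 by omega, show 3*r+3-5 = 3*r-2 by omega,
    show 3*r+3-6 = 3*r-3 by omega]

lemma qcHfactq (t : ℕ) :
    3*((t:ℚ)+2)*(3*t+4)*(3*t+5) * ((4*t+8).choose (t+2) : ℚ)
      = 8*(4*(t:ℚ)+5)*(2*t+3)*(4*t+7) * ((4*t+4).choose (t+1) : ℚ) := by
  rw [Nat.cast_choose ℚ (show t+2 ≤ 4*t+8 by omega),
      Nat.cast_choose ℚ (show t+1 ≤ 4*t+4 by omega),
      show 4*t+8 - (t+2) = 3*t+6 by omega, show 4*t+4 - (t+1) = 3*t+3 by omega]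
  have e1 : ((4*t+8).factorial : ℚ) = (4*t+8)*(4*t+7)*(4*t+6)*(4*t+5)*((4*t+4).factorial : ℚ) := by
    rw [show 4*t+8 = (4*t+7)+1 from rfl, Nat.factorial_succ,
        show 4*t+7 = (4*t+6)+1 from rfl, Nat.factorial_succ,
        show 4*t+6 = (4*t+5)+1 from rfl, Nat.factorial_succ,
        show 4*t+5 = (4*t+4)+1 from rfl, Nat.factorial_succ]
    push_cast; ring
  have e2 : ((3*t+6).factorial : ℚ) = (3*t+6)*(3*t+5)*(3*t+4)*((3*t+3).factorial : ℚ) := by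
    rw [show 3*t+6 = (3*t+5)+1 from rfl, Nat.factorial_succ,
        show 3*t+5 = (3*t+4)+1 from rfl, Nat.factorial_succ,
        show 3*t+4 = (3*t+3)+1 from rfl, Nat.factorial_succ]
    push_cast; ring
  have e3 : ((t+2).factorial : ℚ) = (t+2)*((t+1).factorial : ℚ) := by
    rw [show t+2 = (t+1)+1 from rfl, Nat.factorial_succ]; push_cast; ring
  rw [e1, e2, e3]
  have n1 : ((4*t+4).factorial : ℚ) ≠ 0 := by positivity
  have n2 : ((3*t+3).factorial : ℚ) ≠ 0 := by positivity
  have n3 : ((t+1).factorial : ℚ) ≠ 0 := by positivity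
  field_simp
  ring

lemma qcBase1 : qcC 1 3 = -4 := by
  have hf : qcF 1 = 1 + C 2 * X - X^2 - C 4 * X^3 - X^4 + C 2 * X^5 + X^6 := by
    unfold qcF
    rw [show (C 2 : Polynomial ℤ) = 2 by simp, show (C 4 : Polynomial ℤ) = 4 by simp]
    ring
  unfold qcC
  rw [hf]
  simp [coeff_one, coeff_X]

lemma qcHeart : ∀ r : ℕ, qcC r (3*r) = (-1)^r * ((4*r).choose r : ℤ) := by
  intro r
  induction r with
  | zero => simp [qcC, qcF]
  | succ s ih =>
    rcases Nat.eq_zero_or_pos s with rfl | hs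
    · simpa using qcBase1
    · obtain ⟨t, rfl⟩ := Nat.exists_eq_add_of_le' hs
      -- palindrome facts at level t+1
      have pal1 : qcC (t+1) (3*t+4) = qcC (t+1) (3*t+2) := by
        have := qcPal (t+1) (show 3*t+2 ≤ 6*(t+1) by omega)
        rwa [show 6*(t+1) - (3*t+2) = 3*t+4 by omega] at this
      have pal2 : qcC (t+1) (3*t+5) = qcC (t+1) (3*t+1) := by
        have := qcPal (t+1) (show 3*t+1 ≤ 6*(t+1) by omega)
        rwa [show 6*(t+1) - (3*t+1) = 3*t+5 by omega] at this
      have pal3 : qcC (t+1) (3*t+6) = qcC (t+1) (3*t) := by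
        have := qcPal (t+1) (show 3*t ≤ 6*(t+1) by omega)
        rwa [show 6*(t+1) - 3*t = 3*t+6 by omega] at this
      -- recurrence instances
      have hA := qcRecur (t+1) (by omega) (3*t+2)
      have hB := qcRecur (t+1) (by omega) (3*t+3)
      have hC := qcRecur (t+1) (by omega) (3*t+4)
      rw [show 3*t+2+2 = 3*t+4 from rfl, show 3*t+2+1 = 3*t+3 from rfl, ← pal1] at hA
      rw [show 3*t+3+2 = 3*t+5 from rfl, show 3*t+3+1 = 3*t+4 from rfl] at hB
      rw [show 3*t+4+2 = 3*t+6 from rfl, show 3*t+4+1 = 3*t+5 from rfl] at hC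
      -- qcStep
      have hS := qcStep (t+1) (by omega)
      rw [show 3*(t+1)+3 = 3*t+6 by omega, show 3*(t+1)+2 = 3*t+5 by omega,
          show 3*(t+1)+1 = 3*t+4 by omega, show 3*(t+1)-1 = 3*t+2 by omega,
          show 3*(t+1)-2 = 3*t+1 by omega, show 3*(t+1)-3 = 3*t by omega,
          show 3*(t+1) = 3*t+3 by omega, show t+1+1 = t+2 from rfl,
          ← pal1, ← pal2, ← pal3] at hS
      rw [show 3*(t+1) = 3*t+3 by omega, show 4*(t+1) = 4*t+4 by omega] at ih
      -- cast everything to ℚ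
      have hAq := congrArg (Int.cast : ℤ → ℚ) hA
      have hBq := congrArg (Int.cast : ℤ → ℚ) hB
      have hCq := congrArg (Int.cast : ℤ → ℚ) hC
      have hSq := congrArg (Int.cast : ℤ → ℚ) hS
      have ihq := congrArg (Int.cast : ℤ → ℚ) ih
      push_cast at hAq hBq hCq hSq ihq
      have key : (3*(t:ℚ)+4)*(3*t+5)*(3*t+6) * ((qcC (t+2) (3*t+6) : ℤ) : ℚ)
          = -8*(4*(t:ℚ)+5)*(2*t+3)*(4*t+7) * ((qcC (t+1) (3*t+3) : ℤ) : ℚ) := by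
        linear_combination ((3*(t:ℚ)+4)*(3*t+5)*(3*t+6)) * hSq
          + (2*(3*(t:ℚ)+4)*(3*t+5)) * hCq
          + (4*(3*(t:ℚ)+4)*(4*t+7)) * hBq
          + (-2*((t:ℚ)+2)*((t:ℚ)+3)) * hAq
      have hfq := qcHfactq t
      have goalq : ((qcC (t+2) (3*t+6) : ℤ) : ℚ)
          = ((-1:ℚ))^(t+2) * (((4*t+8).choose (t+2) : ℕ) : ℚ) := by
        have hD : ((3*(t:ℚ)+4)*(3*t+5)*(3*t+6)) ≠ 0 := by positivity
        apply mul_left_cancel₀ hD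
        rw [key]
        linear_combination (-8*(4*(t:ℚ)+5)*(2*t+3)*(4*t+7)) * ihq + ((-1:ℚ))^(t+1) * hfq
      rw [show 3*(t+1+1) = 3*t+6 by omega, show 4*(t+1+1) = 4*t+8 by omega,
          show t+1+1 = t+2 from rfl]
      exact_mod_cast goalq

lemma qcCompneg (q : Polynomial ℤ) (j : ℕ) :
    (q.comp (-X)).coeff j = (-1)^j * q.coeff j := by
  induction q using Polynomial.induction_on' with
  | add p q hp hq => simp [add_comp, hp, hq, mul_add]
  | monomial n a =>
    rw [← C_mul_X_pow_eq_monomial, mul_comp, C_comp, pow_comp, X_comp, neg_pow,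
      show ((-1 : Polynomial ℤ))^n = C ((-1)^n) by rw [map_pow, map_neg, map_one],
      coeff_C_mul, coeff_C_mul, coeff_C_mul, coeff_X_pow]
    rcases eq_or_ne n j with rfl | h
    · simp [mul_comm]
    · simp [h, Ne.symm h]

noncomputable def p3 : Polynomial ℤ := 1 + X + X^2 + X^3

lemma p3_natDegree : p3.natDegree = 3 := by
  unfold p3; compute_degree!

lemma p3_reverse : p3.reverse = p3 := by
  have hp3 : p3 = C 1 * X^0 + C 1 * X^1 + C 1 * X^2 + C 1 * X^3 := by
    rw [map_one]; unfold p3; ring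
  rw [reverse, p3_natDegree, hp3, reflect_add, reflect_add, reflect_add,
    reflect_C_mul_X_pow, reflect_C_mul_X_pow, reflect_C_mul_X_pow, reflect_C_mul_X_pow]
  simp [revAt_le]
  ring

lemma p3_ne : (p3 : Polynomial ℤ) ≠ 0 := fun h => by
  have := congrArg (fun q : Polynomial ℤ => q.coeff 0) h
  simp [p3, coeff_one] at this

lemma P_natDegree (r : ℕ) : (p3^(2*r)).natDegree = 6*r := by
  rw [natDegree_pow, p3_natDegree]; ring

lemma qcPalP (r : ℕ) {k : ℕ} (hk : k ≤ 6*r) :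
    (p3^(2*r)).coeff (6*r - k) = (p3^(2*r)).coeff k := by
  conv_rhs => rw [← p3_reverse, ← qcRevpow]
  rw [coeff_reverse, P_natDegree, revAt_le hk]

lemma qcHprod (r : ℕ) :
    p3^(2*r) * ((p3^(2*r)).comp (-X)) = expand ℤ 2 (qcF r) := by
  rw [pow_comp, ← mul_pow]
  have h1 : p3 * p3.comp (-X) = expand ℤ 2 ((1-X)*(1+X)^2) := by
    simp only [p3, add_comp, one_comp, X_comp, pow_comp, map_mul, map_pow, map_sub,
      map_add, map_one, expand_X]
    ring
  rw [h1, ← map_pow]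
  congr 1
  unfold qcF
  rw [mul_pow, ← pow_mul, show 2*(2*r) = 4*r by ring]

theorem pc_quadrinomial_alt_squares (r : ℕ) :
    ∑ k ∈ Finset.range (6 * r + 1), (-1 : ℤ) ^ k * (pc 3 (2 * r) k) ^ 2 =
      (-1 : ℤ) ^ r * (Nat.choose (4 * r) r : ℤ) := by
  have hp3 : (∑ i ∈ Finset.range (3 + 1), (Polynomial.X : Polynomial ℤ) ^ i) = p3 := by
    rw [Finset.sum_range_succ, Finset.sum_range_succ, Finset.sum_range_succ,
      Finset.sum_range_one, p3]
    ring
  have hpc : ∀ k : ℕ, pc 3 (2*r) (k : ℤ) = (p3^(2*r)).coeff k := by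
    intro k
    rw [pc, if_pos (by positivity), hp3, Int.toNat_natCast]
  have step1 : ∑ k ∈ Finset.range (6 * r + 1), (-1 : ℤ) ^ k * (pc 3 (2 * r) k) ^ 2
      = (p3^(2*r) * ((p3^(2*r)).comp (-X))).coeff (6*r) := by
    rw [coeff_mul, Finset.Nat.sum_antidiagonal_eq_sum_range_succ_mk]
    refine Finset.sum_congr rfl fun k hk => ?_
    have hk' : k ≤ 6*r := by simpa using Nat.lt_succ_iff.mp (Finset.mem_range.mp hk)
    rw [hpc k, qcCompneg, qcPalP r hk']
    have hsign : (-1:ℤ)^(6*r-k) = (-1)^k := by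
      have h2 : ((-1:ℤ)^(6*r-k)) * (-1)^k = 1 := by
        rw [← pow_add, Nat.sub_add_cancel hk', pow_mul]
        norm_num
      have h3 : ((-1:ℤ)^k) * (-1)^k = 1 := by
        rw [← pow_add]
        exact Even.neg_one_pow ⟨k, rfl⟩
      calc (-1:ℤ)^(6*r-k) = (-1:ℤ)^(6*r-k) * (((-1:ℤ)^k) * (-1)^k) := by rw [h3, mul_one]
        _ = (((-1:ℤ)^(6*r-k)) * (-1)^k) * (-1)^k := by ring
        _ = (-1)^k := by rw [h2, one_mul]
    rw [hsign]
    ring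
  rw [step1, qcHprod, coeff_expand (by norm_num), if_pos ⟨3*r, by ring⟩,
    show 6*r/2 = 3*r by omega]
  exact qcHeart r
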